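/- On ℝ⁶ = T*ℝ³ with the magnetized symplectic form ω_B = ω₀ + ε_{ijk}B^i dq^j∧dq^k (B constant), the ternary Hamiltonian vector field of the momenta for the quaternary bracket {f₁,f₂,f₃,f₄}Ω = df₁∧df₂∧df₃∧df₄∧ω_B is X_{p₁,p₂,p₃} = c·B^i ∂/∂q^i for a fixed nonzero constant c; in particular it is zero when B = 0 (standard symplectic structure) and nonzero when B ≠ 0. -/
import Mathlib

set_option synthInstance.maxHeartbeats 1000000
set_option maxHeartbeats 4000000

noncomputable section
open ExteriorAlgebra

abbrev V := (Fin 3 → ℝ) × (Fin 3 → ℝ)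

def dp (j : Fin 3) : Module.Dual ℝ V :=
  (LinearMap.proj j).comp (LinearMap.fst ℝ (Fin 3 → ℝ) (Fin 3 → ℝ))

def dq (j : Fin 3) : Module.Dual ℝ V :=
  (LinearMap.proj j).comp (LinearMap.snd ℝ (Fin 3 → ℝ) (Fin 3 → ℝ))

lemma iswap (a b : Module.Dual ℝ V) :
    ι ℝ b * ι ℝ a = -(ι ℝ a * ι ℝ b) :=
  eq_neg_of_add_eq_zero_left (by rw [add_comm]; exact ι_add_mul_swap a b)

lemma iswap' (a b : Module.Dual ℝ V) (x : ExteriorAlgebra ℝ (Module.Dual ℝ V)) :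
    ι ℝ b * (ι ℝ a * x) = -(ι ℝ a * (ι ℝ b * x)) := by
  rw [← mul_assoc, iswap, neg_mul, mul_assoc]

lemma isq (a : Module.Dual ℝ V) : ι ℝ a * ι ℝ a = 0 := ι_sq_zero a

lemma isq' (a : Module.Dual ℝ V) (x : ExteriorAlgebra ℝ (Module.Dual ℝ V)) :
    ι ℝ a * (ι ℝ a * x) = 0 := by rw [← mul_assoc, isq, zero_mul]

lemma dual_decomp (ℓ : Module.Dual ℝ V) :
    ℓ = ∑ j, ℓ ((Pi.single j 1 : Fin 3 → ℝ), (0:Fin 3 → ℝ)) • dp j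
      + ∑ j, ℓ ((0:Fin 3 → ℝ), (Pi.single j 1 : Fin 3 → ℝ)) • dq j := by
  refine LinearMap.ext fun v => ?_
  have hv : v = (∑ j, v.1 j • (((Pi.single j 1 : Fin 3 → ℝ), (0:Fin 3 → ℝ)) : V))
      + ∑ j, v.2 j • ((((0:Fin 3 → ℝ)), (Pi.single j 1 : Fin 3 → ℝ)) : V) := by
    refine Prod.ext ?_ ?_ <;> funext i <;>
      fin_cases i <;> simp [Fin.sum_univ_three, Pi.single_apply]
  conv_lhs => rw [hv]
  simp only [Fin.sum_univ_three, map_add, map_smul, smul_eq_mul]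
  simp [dp, dq]
  ring

/-- ω₀ = Σᵢ dpᵢ ∧ dqⁱ -/
def omega0 : ExteriorAlgebra ℝ (Module.Dual ℝ V) :=
  ∑ j, ExteriorAlgebra.ι ℝ (dp j) * ExteriorAlgebra.ι ℝ (dq j)

/-- the Levi-Civita symbol on Fin 3 -/
def eps (i j k : Fin 3) : ℝ :=
  (((j : ℝ) - (i : ℝ)) * ((k : ℝ) - (j : ℝ)) * ((k : ℝ) - (i : ℝ))) / 2

/-- ω_B = ω₀ + ε_{ijk} B^i dq^j ∧ dq^k -/
def omegaB (B : Fin 3 → ℝ) : ExteriorAlgebra ℝ (Module.Dual ℝ V) :=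
  omega0 + ∑ i, ∑ j, ∑ k,
    (eps i j k * B i) • (ExteriorAlgebra.ι ℝ (dq j) * ExteriorAlgebra.ι ℝ (dq k))

theorem ternary_field_of_momenta_is_magnetic_field :
    ∃ c : ℝ, c ≠ 0 ∧
      ∀ (B : Fin 3 → ℝ) (g : V → ℝ) (x : V), DifferentiableAt ℝ g x →
        ExteriorAlgebra.ι ℝ (dp 0) * ExteriorAlgebra.ι ℝ (dp 1) *
            ExteriorAlgebra.ι ℝ (dp 2) *
            ExteriorAlgebra.ι ℝ ((fderiv ℝ g x).toLinearMap) * omegaB B =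
          (c * ∑ i, B i * fderiv ℝ g x ((0 : Fin 3 → ℝ), Pi.single i 1)) •
            ((6 : ℝ)⁻¹ • omega0 ^ 3) := by
  refine ⟨-2, by norm_num, ?_⟩
  intro B g x _
  have hd := dual_decomp (fderiv ℝ g x).toLinearMap
  rw [hd]
  simp only [omegaB, omega0, eps, Fin.sum_univ_three, map_add, map_smul,
    ContinuousLinearMap.coe_coe, pow_succ, pow_zero, one_mul]
  norm_num
  simp only [mul_add, add_mul, smul_mul_assoc, mul_smul_comm, smul_smul, smul_add,
    mul_assoc, neg_mul, mul_neg, neg_neg, zero_mul, mul_zero, smul_zero, zero_smul,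
    add_zero, zero_add, neg_zero, iswap (dp 0) (dp 1), iswap' (dp 0) (dp 1), iswap (dp 0) (dp 2), iswap' (dp 0) (dp 2), iswap (dp 0) (dq 0), iswap' (dp 0) (dq 0), iswap (dp 0) (dq 1), iswap' (dp 0) (dq 1), iswap (dp 0) (dq 2), iswap' (dp 0) (dq 2), iswap (dp 1) (dp 2), iswap' (dp 1) (dp 2), iswap (dp 1) (dq 0), iswap' (dp 1) (dq 0), iswap (dp 1) (dq 1), iswap' (dp 1) (dq 1), iswap (dp 1) (dq 2), iswap' (dp 1) (dq 2), iswap (dp 2) (dq 0), iswap' (dp 2) (dq 0), iswap (dp 2) (dq 1), iswap' (dp 2) (dq 1), iswap (dp 2) (dq 2), iswap' (dp 2) (dq 2), iswap (dq 0) (dq 1), iswap' (dq 0) (dq 1), iswap (dq 0) (dq 2), iswap' (dq 0) (dq 2), iswap (dq 1) (dq 2), iswap' (dq 1) (dq 2), isq (dp 0), isq (dp 1), isq (dp 2), isq (dq 0), isq (dq 1), isq (dq 2), isq' (dp 0), isq' (dp 1), isq' (dp 2), isq' (dq 0), isq' (dq 1), isq' (dq 2)]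
  module
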